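/- (Particle–hole symmetry of the macroscopic equation.) Let j > 0 and K ≥ 1 an integer. If ρ : [−1,1]×[0,∞) → [0,1] solves the macroscopic integral equation with initial datum ρ₀, then the function ρ̂(r,t) := 1 − ρ(−r, t) solves the macroscopic integral equation with initial datum ρ̂₀(r) := 1 − ρ₀(−r). -/

import Mathlib

open MeasureTheory

/-- The Gaussian heat kernel on the real line. -/
noncomputable def G (t r r' : ℝ) : ℝ :=
  Real.exp (-(r - r') ^ 2 / (2 * t)) / Real.sqrt (2 * Real.pi * t)

/-- The Neumann heat kernel on `[-1,1]`, obtained from the Gaussian kernel by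
the reflection map: for `r' ∈ (-1,1)`,
`P t r r' = ∑_{n∈ℤ} [G t r (r'+4n) + G t r (2−r'+4n)]`, while at the boundary
`P t r (±1) = ∑_{n∈ℤ} 2·G t r (±1+4n)`. -/
noncomputable def P (t r r' : ℝ) : ℝ :=
  if r' = 1 ∨ r' = -1 then ∑' n : ℤ, 2 * G t r (r' + 4 * n)
  else ∑' n : ℤ, (G t r (r' + 4 * n) + G t r (2 - r' + 4 * n))


/-- `ρ : [−1,1] × [0,∞) → [0,1]` (encoded as `ρ : ℝ → ℝ → ℝ`, first argument the
space variable) is a bounded measurable solution of the macroscopic integral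
equation with initial datum `ρ₀ : [−1,1] → [0,1]`: it takes values in `[0,1]`,
agrees with `ρ₀` at time `0`, and for all `t > 0`, `r ∈ [−1,1]`,
`ρ(r,t) = ∫_{−1}^{1} P_t(r,r')ρ₀(r')dr'
  + (j/2)∫_0^t [P_s(r,1)(1 − ρ(1,t−s)^K) − P_s(r,−1)(1 − (1 − ρ(−1,t−s))^K)] ds`. -/
def IsMacroSolution (j : ℝ) (K : ℕ) (ρ₀ : ℝ → ℝ) (ρ : ℝ → ℝ → ℝ) : Prop :=
  Measurable (Function.uncurry ρ) ∧
  (∀ r ∈ Set.Icc (-1 : ℝ) 1, ∀ t : ℝ, 0 ≤ t → ρ r t ∈ Set.Icc (0 : ℝ) 1) ∧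
  (∀ r ∈ Set.Icc (-1 : ℝ) 1, ρ r 0 = ρ₀ r) ∧
  (∀ t : ℝ, 0 < t → ∀ r ∈ Set.Icc (-1 : ℝ) 1,
    ρ r t = (∫ r' in (-1 : ℝ)..1, P t r r' * ρ₀ r')
      + j / 2 * ∫ s in (0 : ℝ)..t,
          (P s r 1 * (1 - (ρ 1 (t - s)) ^ K)
            - P s r (-1) * (1 - (1 - ρ (-1) (t - s)) ^ K)))

lemma G_nonneg (t r x : ℝ) : 0 ≤ G t r x := by
  unfold G; positivity

lemma G_zero {t : ℝ} (ht : t ≤ 0) (r x : ℝ) : G t r x = 0 := by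
  have h : Real.sqrt (2 * Real.pi * t) = 0 := by
    apply Real.sqrt_eq_zero'.mpr
    have := Real.pi_pos
    nlinarith
  simp [G, h]

lemma G_neg (t r x : ℝ) : G t (-r) x = G t r (-x) := by
  unfold G
  congr 2
  ring

lemma continuous_G (t r : ℝ) : Continuous (fun x => G t r x) := by
  unfold G
  fun_prop

lemma exp_term_le {t : ℝ} (ht : 0 < t) (d : ℝ) (n : ℤ) :
    Real.exp (-(d - 4 * n) ^ 2 / (2 * t)) ≤
      Real.exp (d ^ 2 / (2 * t)) * Real.exp (-(4 / t) * (n : ℝ) ^ 2) := by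
  rw [← Real.exp_add]
  apply Real.exp_le_exp.mpr
  have expand : d ^ 2 / (2 * t) + -(4 / t) * (n : ℝ) ^ 2 - (-(d - 4 * n) ^ 2 / (2 * t))
      = (2 * (d - 2 * (n : ℝ)) ^ 2) / (2 * t) := by
    field_simp
    ring
  have pos : 0 ≤ (2 * (d - 2 * (n : ℝ)) ^ 2) / (2 * t) := by positivity
  linarith

lemma summable_exp_sq {k : ℝ} (hk : 0 < k) :
    Summable (fun n : ℤ => Real.exp (-k * (n : ℝ) ^ 2)) := by
  have hgeom : Summable (fun n : ℕ => Real.exp (-k) ^ n) :=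
    summable_geometric_of_lt_one (Real.exp_nonneg _)
      (Real.exp_lt_one_iff.mpr (by linarith))
  have hnat : Summable (fun n : ℕ => Real.exp (-k * (n : ℝ) ^ 2)) := by
    apply Summable.of_nonneg_of_le (fun n => (Real.exp_pos _).le) (fun n => ?_) hgeom
    rw [← Real.exp_nat_mul]
    apply Real.exp_le_exp.mpr
    have h1 : (n : ℝ) ≤ (n : ℝ) ^ 2 := by
      rcases Nat.eq_zero_or_pos n with h | h
      · simp [h]
      · have h2 : (1:ℝ) ≤ (n:ℝ) := by exact_mod_cast h
        nlinarith
    nlinarith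
  apply Summable.of_nat_of_neg <;> · simpa using hnat

lemma summable_G {t : ℝ} (ht : 0 < t) (r c : ℝ) :
    Summable (fun n : ℤ => G t r (c + 4 * n)) := by
  have heq : (fun n : ℤ => G t r (c + 4 * n))
      = fun n : ℤ => Real.exp (-((r - c) - 4 * n) ^ 2 / (2 * t)) / Real.sqrt (2 * Real.pi * t) := by
    funext n
    unfold G
    congr 3
    ring
  rw [heq]
  apply Summable.div_const
  apply Summable.of_nonneg_of_le (fun n => (Real.exp_pos _).le)
    (fun n => exp_term_le ht (r - c) n)
  exact (summable_exp_sq (by positivity : (0:ℝ) < 4 / t)).mul_left _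

lemma P_symm (t r r' : ℝ) : P t (-r) (-r') = P t r r' := by
  by_cases h : r' = 1 ∨ r' = -1
  · have h' : -r' = 1 ∨ -r' = -1 := by rcases h with h | h <;> simp [h]
    simp only [P, if_pos h, if_pos h']
    have key : ∀ n : ℤ, 2 * G t (-r) (-r' + 4 * n)
        = (fun m : ℤ => 2 * G t r (r' + 4 * m)) (-n) := by
      intro n
      simp only
      rw [G_neg]
      congr 2
      push_cast
      ring
    calc (∑' n : ℤ, 2 * G t (-r) (-r' + 4 * n))
        = ∑' n : ℤ, (fun m : ℤ => 2 * G t r (r' + 4 * m)) ((Equiv.neg ℤ) n) := by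
          exact tsum_congr key
      _ = ∑' n : ℤ, 2 * G t r (r' + 4 * n) := by
          simpa using (Equiv.neg ℤ).tsum_eq (fun m : ℤ => 2 * G t r (r' + 4 * m))
  · have h' : ¬(-r' = 1 ∨ -r' = -1) := by
      push_neg at h ⊢
      constructor <;> intro hc <;> [exact h.2 (by linarith); exact h.1 (by linarith)]
    simp only [P, if_neg h, if_neg h']
    rcases le_or_gt t 0 with ht | ht
    · simp [G_zero ht]
    · have hA : Summable (fun n : ℤ => G t r (r' + 4 * n)) := summable_G ht r r'
      have hB : Summable (fun n : ℤ => G t r (2 - r' + 4 * n)) := summable_G ht r (2 - r')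
      set A : ℤ → ℝ := fun n => G t r (r' + 4 * n) with hAdef
      set B : ℤ → ℝ := fun n => G t r (2 - r' + 4 * n) with hBdef
      have key : ∀ n : ℤ, G t (-r) (-r' + 4 * n) + G t (-r) (2 - -r' + 4 * n)
          = A (-n) + B (-n - 1) := by
        intro n
        rw [G_neg, G_neg, hAdef, hBdef]
        simp only
        congr 2 <;> · push_cast; ring
      have e2 : ℤ ≃ ℤ := (Equiv.neg ℤ).trans (Equiv.subRight 1)
      calc (∑' n : ℤ, (G t (-r) (-r' + 4 * n) + G t (-r) (2 - -r' + 4 * n)))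
          = ∑' n : ℤ, (A (-n) + B (-n - 1)) := tsum_congr key
        _ = (∑' n : ℤ, A (-n)) + ∑' n : ℤ, B (-n - 1) := by
            apply Summable.tsum_add
            · exact hA.comp_injective neg_injective
            · exact hB.comp_injective (fun a b hab => by omega)
        _ = (∑' n : ℤ, A n) + ∑' n : ℤ, B n := by
            congr 1
            · simpa using (Equiv.neg ℤ).tsum_eq A
            · simpa using (((Equiv.neg ℤ).trans (Equiv.subRight 1)).tsum_eq B)
        _ = ∑' n : ℤ, (A n + B n) := (Summable.tsum_add hA hB).symm
lemma G_bound {t : ℝ} (ht : 0 < t) (r c : ℝ) (hd : (r - c) ^ 2 ≤ 16) (n : ℤ) :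
    G t r (c + 4 * n) ≤ Real.exp (8 / t) * Real.exp (-(4 / t) * (n : ℝ) ^ 2)
      / Real.sqrt (2 * Real.pi * t) := by
  have hs : (0:ℝ) < Real.sqrt (2 * Real.pi * t) := by
    have := Real.pi_pos; positivity
  unfold G
  gcongr
  calc Real.exp (-(r - (c + 4 * n)) ^ 2 / (2 * t))
      = Real.exp (-((r - c) - 4 * n) ^ 2 / (2 * t)) := by congr 2; ring
    _ ≤ Real.exp ((r - c) ^ 2 / (2 * t)) * Real.exp (-(4 / t) * (n : ℝ) ^ 2) :=
        exp_term_le ht _ n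
    _ ≤ Real.exp (8 / t) * Real.exp (-(4 / t) * (n : ℝ) ^ 2) := by
        have h8 : (r - c) ^ 2 / (2 * t) ≤ 8 / t := by
          rw [show (8:ℝ)/t = 16/(2*t) by ring]
          gcongr
        exact mul_le_mul_of_nonneg_right (Real.exp_le_exp.mpr h8) (Real.exp_pos _).le

lemma pair_bound {t r : ℝ} (ht : 0 < t) (hr : r ∈ Set.Icc (-1:ℝ) 1) (n : ℤ)
    {x : ℝ} (hx : x ∈ Set.Icc (-1:ℝ) 1) :
    ‖G t r (x + 4 * n) + G t r (2 - x + 4 * n)‖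
      ≤ 2 * (Real.exp (8 / t) * Real.exp (-(4 / t) * (n : ℝ) ^ 2)
          / Real.sqrt (2 * Real.pi * t)) := by
  obtain ⟨hr1, hr2⟩ := hr
  obtain ⟨hx1, hx2⟩ := hx
  have b1 := G_bound ht r x (by nlinarith) n
  have b2 := G_bound ht r (2 - x) (by nlinarith) n
  rw [Real.norm_eq_abs, abs_of_nonneg (add_nonneg (G_nonneg _ _ _) (G_nonneg _ _ _))]
  linarith

lemma u_summable {t : ℝ} (ht : 0 < t) :
    Summable (fun n : ℤ => 2 * (Real.exp (8 / t) * Real.exp (-(4 / t) * (n : ℝ) ^ 2)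
      / Real.sqrt (2 * Real.pi * t))) :=
  (((summable_exp_sq (by positivity : (0:ℝ) < 4 / t)).mul_left _).div_const _).mul_left 2

lemma F_contOn {t r : ℝ} (ht : 0 < t) (hr : r ∈ Set.Icc (-1:ℝ) 1) :
    ContinuousOn (fun x : ℝ => ∑' n : ℤ, (G t r (x + 4 * n) + G t r (2 - x + 4 * n)))
      (Set.Icc (-1:ℝ) 1) := by
  rw [continuousOn_iff_continuous_restrict]
  show Continuous fun x : (Set.Icc (-1:ℝ) 1) =>
    ∑' n : ℤ, (G t r (↑x + 4 * n) + G t r (2 - ↑x + 4 * n))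
  apply continuous_tsum
  · intro n
    unfold G
    fun_prop
  · exact u_summable ht
  · exact fun n x => pair_bound ht hr n x.2

lemma P_eq_ae (t r : ℝ) :
    ∀ᵐ x : ℝ, P t r x = ∑' n : ℤ, (G t r (x + 4 * n) + G t r (2 - x + 4 * n)) := by
  have h1 : (volume : Measure ℝ) {(1:ℝ), -1} = 0 := (Set.toFinite _).measure_zero _
  rw [MeasureTheory.ae_iff]
  refine measure_mono_null ?_ h1
  intro x hx
  simp only [Set.mem_setOf_eq] at hx
  by_contra hx2
  simp only [Set.mem_insert_iff, Set.mem_singleton_iff] at hx2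
  push_neg at hx2
  exact hx (by rw [P, if_neg (by tauto)])

lemma P_integrableOn {t r : ℝ} (ht : 0 < t) (hr : r ∈ Set.Icc (-1:ℝ) 1) :
    IntegrableOn (fun x => P t r x) (Set.Ioc (-1:ℝ) 1) := by
  have hF : IntegrableOn
      (fun x => ∑' n : ℤ, (G t r (x + 4 * n) + G t r (2 - x + 4 * n)))
      (Set.Ioc (-1:ℝ) 1) :=
    ((F_contOn ht hr).integrableOn_Icc).mono_set Set.Ioc_subset_Icc_self
  have hpe : (fun x => P t r x)
      =ᵐ[volume.restrict (Set.Ioc (-1:ℝ) 1)]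
      (fun x => ∑' n : ℤ, (G t r (x + 4 * n) + G t r (2 - x + 4 * n))) :=
    ae_restrict_of_ae (P_eq_ae t r)
  exact hF.congr hpe.symm

lemma G_repr {t : ℝ} (r : ℝ) :
    (fun x : ℝ => G t r x)
      = fun x => Real.exp (-(1/(2*t)) * (x - r) ^ 2) / Real.sqrt (2 * Real.pi * t) := by
  funext x
  unfold G
  congr 2
  by_cases h : t = 0
  · simp [h]
  · field_simp
    ring

lemma G_integrable {t : ℝ} (ht : 0 < t) (r : ℝ) : Integrable (fun x => G t r x) := by
  have h1 : Integrable (fun x : ℝ => Real.exp (-(1/(2*t)) * x ^ 2)) :=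
    integrable_exp_neg_mul_sq (by positivity)
  rw [G_repr r]
  exact (h1.comp_sub_right r).div_const _

lemma G_integral {t : ℝ} (ht : 0 < t) (r : ℝ) : ∫ x, G t r x = 1 := by
  have hs : (0:ℝ) < Real.sqrt (2 * Real.pi * t) := by
    have := Real.pi_pos; positivity
  rw [G_repr r, integral_div,
    integral_sub_right_eq_self (fun x : ℝ => Real.exp (-(1/(2*t)) * x ^ 2)) r,
    integral_gaussian, div_eq_one_iff_eq hs.ne']
  congr 1
  field_simp
lemma union_Ioc : (⋃ n : ℤ, Set.Ioc (-1 + 4*(n:ℝ)) (3 + 4*(n:ℝ))) = Set.univ := by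
  ext x
  simp only [Set.mem_iUnion, Set.mem_Ioc, Set.mem_univ, iff_true]
  refine ⟨⌈(x - 3) / 4⌉, ?_, ?_⟩
  · have h2 := Int.ceil_lt_add_one ((x - 3) / 4)
    have h3 : ((⌈(x - 3) / 4⌉ : ℤ) : ℝ) - 1 < (x - 3) / 4 := by linarith
    have h4 := (lt_div_iff₀ (by norm_num : (0:ℝ) < 4)).mp h3
    linarith
  · have h1 := Int.le_ceil ((x - 3) / 4)
    have h2 := (div_le_iff₀ (by norm_num : (0:ℝ) < 4)).mp h1
    linarith

lemma disj_Ioc : Pairwise (Function.onFun Disjoint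
    (fun n : ℤ => Set.Ioc (-1 + 4*(n:ℝ)) (3 + 4*(n:ℝ)))) := by
  intro m n hmn
  rw [Function.onFun, Set.Ioc_disjoint_Ioc]
  rcases lt_or_gt_of_ne hmn with h | h
  · have h1 : (m:ℝ) + 1 ≤ n := by exact_mod_cast h
    calc min (3 + 4*(m:ℝ)) (3 + 4*(n:ℝ)) ≤ 3 + 4*(m:ℝ) := min_le_left _ _
      _ ≤ -1 + 4*(n:ℝ) := by linarith
      _ ≤ max (-1 + 4*(m:ℝ)) (-1 + 4*(n:ℝ)) := le_max_right _ _
  · have h1 : (n:ℝ) + 1 ≤ m := by exact_mod_cast h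
    calc min (3 + 4*(m:ℝ)) (3 + 4*(n:ℝ)) ≤ 3 + 4*(n:ℝ) := min_le_right _ _
      _ ≤ -1 + 4*(m:ℝ) := by linarith
      _ ≤ max (-1 + 4*(m:ℝ)) (-1 + 4*(n:ℝ)) := le_max_left _ _

lemma hval {t : ℝ} (ht : 0 < t) (r : ℝ) (n : ℤ) :
    ∫ x in Set.Ioc (-1:ℝ) 1, (G t r (x + 4 * n) + G t r (2 - x + 4 * n))
      = ∫ x in Set.Ioc (-1 + 4*(n:ℝ)) (3 + 4*(n:ℝ)), G t r x := by
  have hc := continuous_G t r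
  rw [← intervalIntegral.integral_of_le (by norm_num : (-1:ℝ) ≤ 1)]
  have i1 : IntervalIntegrable (fun x : ℝ => G t r (x + 4 * (n:ℝ))) volume (-1) 1 := by
    apply Continuous.intervalIntegrable
    exact hc.comp (by fun_prop)
  have i2 : IntervalIntegrable (fun x : ℝ => G t r (2 - x + 4 * (n:ℝ))) volume (-1) 1 := by
    apply Continuous.intervalIntegrable
    exact hc.comp (by fun_prop)
  rw [intervalIntegral.integral_add i1 i2]
  rw [intervalIntegral.integral_comp_add_right (fun x => G t r x) (4*(n:ℝ))]
  simp only [show ∀ x : ℝ, 2 - x + 4*(n:ℝ) = 2 + 4*(n:ℝ) - x from fun x => by ring]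
  rw [intervalIntegral.integral_comp_sub_left (fun x => G t r x) (2 + 4*(n:ℝ))]
  rw [show 2 + 4*(n:ℝ) - 1 = 1 + 4*(n:ℝ) from by ring,
      show 2 + 4*(n:ℝ) - (-1) = 3 + 4*(n:ℝ) from by ring]
  rw [intervalIntegral.integral_add_adjacent_intervals
    (hc.intervalIntegrable _ _) (hc.intervalIntegrable _ _)]
  rw [intervalIntegral.integral_of_le (by push_cast; linarith : (-1 + 4*(n:ℝ)) ≤ 3 + 4*(n:ℝ))]
lemma P_mass {t r : ℝ} (ht : 0 < t) (hr : r ∈ Set.Icc (-1:ℝ) 1) :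
    ∫ x in Set.Ioc (-1:ℝ) 1, P t r x = 1 := by
  have hfcont : ∀ n : ℤ, Continuous (fun x : ℝ => G t r (x + 4*n) + G t r (2 - x + 4*n)) := by
    intro n; unfold G; fun_prop
  have step1 : ∫ x in Set.Ioc (-1:ℝ) 1, P t r x
      = ∫ x in Set.Ioc (-1:ℝ) 1, ∑' n : ℤ, (G t r (x + 4*n) + G t r (2 - x + 4*n)) :=
    integral_congr_ae (ae_restrict_of_ae (P_eq_ae t r))
  have hfin : ∑' n : ℤ, ∫⁻ x in Set.Ioc (-1:ℝ) 1,
      ‖G t r (x + 4*n) + G t r (2 - x + 4*n)‖₊ ≠ ⊤ := by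
    apply ne_top_of_le_ne_top
      (?_ : (∑' n : ℤ, ENNReal.ofReal (2 * (Real.exp (8/t) * Real.exp (-(4/t)*(n:ℝ)^2)
        / Real.sqrt (2*Real.pi*t))) * 2) ≠ ⊤)
    · apply ENNReal.tsum_le_tsum
      intro n
      calc ∫⁻ x in Set.Ioc (-1:ℝ) 1, ‖G t r (x + 4*n) + G t r (2 - x + 4*n)‖₊
          ≤ ∫⁻ _x in Set.Ioc (-1:ℝ) 1, ENNReal.ofReal (2 * (Real.exp (8/t)
              * Real.exp (-(4/t)*(n:ℝ)^2) / Real.sqrt (2*Real.pi*t))) := by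
            apply setLIntegral_mono measurable_const
            intro x hx
            rw [← enorm_eq_nnnorm, ← ofReal_norm]
            exact ENNReal.ofReal_le_ofReal
              (pair_bound ht hr n (Set.Ioc_subset_Icc_self hx))
        _ = ENNReal.ofReal (2 * (Real.exp (8/t) * Real.exp (-(4/t)*(n:ℝ)^2)
              / Real.sqrt (2*Real.pi*t))) * 2 := by
            rw [setLIntegral_const, Real.volume_Ioc]
            norm_num
    · rw [ENNReal.tsum_mul_right,
        ← ENNReal.ofReal_tsum_of_nonneg (fun n => by positivity) (u_summable ht)]
      exact ENNReal.mul_ne_top ENNReal.ofReal_ne_top (by norm_num)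
  rw [step1, integral_tsum (fun n => (hfcont n).aestronglyMeasurable) hfin]
  calc (∑' n : ℤ, ∫ x in Set.Ioc (-1:ℝ) 1, (G t r (x + 4*n) + G t r (2 - x + 4*n)))
      = ∑' n : ℤ, ∫ x in Set.Ioc (-1 + 4*(n:ℝ)) (3 + 4*(n:ℝ)), G t r x :=
        tsum_congr (hval ht r)
    _ = ∫ x in ⋃ n : ℤ, Set.Ioc (-1 + 4*(n:ℝ)) (3 + 4*(n:ℝ)), G t r x :=
        (integral_iUnion (fun n => measurableSet_Ioc) disj_Ioc
          ((G_integrable ht r).integrableOn)).symm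
    _ = 1 := by
        rw [union_Ioc, Measure.restrict_univ]
        exact G_integral ht r

/-- Particle–hole symmetry of the macroscopic equation: if `ρ` solves the
macroscopic integral equation with initial datum `ρ₀`, then
`ρ̂(r,t) := 1 − ρ(−r,t)` solves it with initial datum `ρ̂₀(r) := 1 − ρ₀(−r)`. -/
theorem macro_particle_hole_symmetry (j : ℝ) (hj : 0 < j) (K : ℕ) (hK : 1 ≤ K)
    (ρ₀ : ℝ → ℝ) (ρ : ℝ → ℝ → ℝ) (hρ : IsMacroSolution j K ρ₀ ρ) :
    IsMacroSolution j K (fun r => 1 - ρ₀ (-r)) (fun r t => 1 - ρ (-r) t) := by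
  obtain ⟨hmeas, hrange, hinit, heq⟩ := hρ
  have hIcc : ∀ x : ℝ, x ∈ Set.Icc (-1:ℝ) 1 → -x ∈ Set.Icc (-1:ℝ) 1 := fun x hx =>
    ⟨by linarith [hx.2], by linarith [hx.1]⟩
  refine ⟨?_, ?_, ?_, ?_⟩
  · have h1 : Measurable fun p : ℝ × ℝ => ρ (-p.1) p.2 :=
      hmeas.comp ((measurable_fst.neg).prodMk measurable_snd)
    exact measurable_const.sub h1
  · intro r hr t ht
    have h := hrange (-r) (hIcc r hr) t ht
    simp only [Set.mem_Icc] at h ⊢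
    constructor <;> linarith [h.1, h.2]
  · intro r hr
    simp only
    rw [hinit (-r) (hIcc r hr)]
  · intro t ht r hr
    have hr' := hIcc r hr
    have E := heq t ht (-r) hr'
    simp only [neg_neg]
    have hmIoc : MeasurableSet (Set.Ioc (-1:ℝ) 1) := measurableSet_Ioc
    have hPint := P_integrableOn ht hr
    -- time integral flip
    have hI2 : (∫ s in (0:ℝ)..t, (P s r 1 * (1 - (1 - ρ (-1) (t - s)) ^ K)
          - P s r (-1) * (1 - (1 - (1 - ρ 1 (t - s))) ^ K)))
        = - ∫ s in (0:ℝ)..t, (P s (-r) 1 * (1 - ρ 1 (t - s) ^ K)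
          - P s (-r) (-1) * (1 - (1 - ρ (-1) (t - s)) ^ K)) := by
      rw [← intervalIntegral.integral_neg]
      apply intervalIntegral.integral_congr
      intro s _
      have h1 : P s r 1 = P s (-r) (-1) := (P_symm s r 1).symm
      have h2 : P s r (-1) = P s (-r) 1 := by
        have h := P_symm s r (-1); rw [neg_neg] at h; exact h.symm
      simp only
      rw [h1, h2]
      ring
    -- space integral
    have hρm : Measurable fun x : ℝ => ρ (-x) 0 :=
      hmeas.comp (measurable_neg.prodMk measurable_const)
    have hprod : IntegrableOn (fun x => P t r x * ρ (-x) 0) (Set.Ioc (-1:ℝ) 1) := by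
      have hsm : AEStronglyMeasurable (fun x => P t r x * ρ (-x) 0)
          (volume.restrict (Set.Ioc (-1:ℝ) 1)) :=
        hPint.aestronglyMeasurable.mul hρm.aestronglyMeasurable
      apply Integrable.mono hPint hsm
      filter_upwards [ae_restrict_mem hmIoc] with x hx
      have hv := hrange (-x) (hIcc x (Set.Ioc_subset_Icc_self hx)) 0 le_rfl
      rw [norm_mul]
      calc ‖P t r x‖ * ‖ρ (-x) 0‖ ≤ ‖P t r x‖ * 1 := by
            apply mul_le_mul_of_nonneg_left _ (norm_nonneg _)
            rw [Real.norm_eq_abs, abs_le]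
            exact ⟨by linarith [hv.1], by linarith [hv.2]⟩
        _ = ‖P t r x‖ := mul_one _
    have e1 : (∫ r' in (-1:ℝ)..1, P t r r' * (1 - ρ₀ (-r')))
        = ∫ x in Set.Ioc (-1:ℝ) 1, (P t r x - P t r x * ρ (-x) 0) := by
      rw [intervalIntegral.integral_of_le (by norm_num : (-1:ℝ) ≤ 1)]
      apply setIntegral_congr_fun hmIoc
      intro x hx
      show P t r x * (1 - ρ₀ (-x)) = P t r x - P t r x * ρ (-x) 0
      rw [← hinit (-x) (hIcc x (Set.Ioc_subset_Icc_self hx))]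
      ring
    have e2 : ∫ x in Set.Ioc (-1:ℝ) 1, (P t r x - P t r x * ρ (-x) 0)
        = (∫ x in Set.Ioc (-1:ℝ) 1, P t r x)
          - ∫ x in Set.Ioc (-1:ℝ) 1, P t r x * ρ (-x) 0 :=
      integral_sub hPint hprod
    have e3 : ∫ x in Set.Ioc (-1:ℝ) 1, P t r x * ρ (-x) 0
        = ∫ r' in (-1:ℝ)..1, P t (-r) r' * ρ₀ r' := by
      rw [← intervalIntegral.integral_of_le (by norm_num : (-1:ℝ) ≤ 1)]
      have e4 : (∫ x in (-1:ℝ)..1, P t r x * ρ (-x) 0)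
          = ∫ x in (-1:ℝ)..1, P t r (-x) * ρ x 0 := by
        have h5 := intervalIntegral.integral_comp_neg (a := (-1:ℝ)) (b := 1)
          (fun y => P t r (-y) * ρ y 0)
        simpa [neg_neg] using h5
      rw [e4, intervalIntegral.integral_of_le (by norm_num : (-1:ℝ) ≤ 1),
        intervalIntegral.integral_of_le (by norm_num : (-1:ℝ) ≤ 1)]
      apply setIntegral_congr_fun hmIoc
      intro x hx
      show P t r (-x) * ρ x 0 = P t (-r) x * ρ₀ x
      have h := P_symm t r (-x); rw [neg_neg] at h
      rw [← hinit x (Set.Ioc_subset_Icc_self hx), h]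
    have key1 : (∫ r' in (-1:ℝ)..1, P t r r' * (1 - ρ₀ (-r')))
        = 1 - ∫ r' in (-1:ℝ)..1, P t (-r) r' * ρ₀ r' := by
      rw [e1, e2, e3, P_mass ht hr]
    rw [key1, hI2, E]
    ring
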